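/- Let s be as in the context (any of the four cases). Let 2 ≤ k ≤ D+1, let η, η₁ ∈ Δ̄_K^k and η₂ ∈ (Δ̄_K)₊ with η = η₁ + η₂. Then η ∈ Δ^O, i.e. row(sη) ≠ row(η) and col(sη) ≠ col(η). -/

import Mathlib

/- Common framework: type A_l root system realized in ℝ^{ℕ} (coordinates 1,…,l+1 used),
   the Weyl group as permutations of ℕ acting by permuting coordinates, and the
   Weyl group element s = s₁s₂ of Proposition 4.2 (all four parity cases). -/

noncomputable section

namespace DPW

/-- The ambient vector space (only coordinates 1,…,l+1 are used). -/
abbrev V : Type := ℕ → ℝ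

/-- Standard basis vector e_i. -/
def evec (i : ℕ) : V := fun j => if j = i then 1 else 0

/-- The root e_i − e_j. -/
def rt (i j : ℕ) : V := evec i - evec j

/-- The root system Δ of type A_l. -/
def Delta (l : ℕ) : Set V :=
  {v | ∃ i j, 1 ≤ i ∧ i ≤ l + 1 ∧ 1 ≤ j ∧ j ≤ l + 1 ∧ i ≠ j ∧ v = rt i j}

/-- Positive roots Δ₊. -/
def DeltaPos (l : ℕ) : Set V :=
  {v | ∃ i j, 1 ≤ i ∧ i < j ∧ j ≤ l + 1 ∧ v = rt i j}

/-- Negative roots Δ₋ = −Δ₊. -/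
def DeltaNeg (l : ℕ) : Set V := {v | -v ∈ DeltaPos l}

/-- Action of a permutation on V : (σ·v)_j = v_{σ⁻¹(j)}. -/
def pact (σ : Equiv.Perm ℕ) (v : V) : V := fun j => v (σ⁻¹ j)

/-- row(e_a − e_b) = a. -/
def rowOf (v : V) : ℕ := sInf {a | v a = 1}

/-- col(e_a − e_b) = b. -/
def colOf (v : V) : ℕ := sInf {b | v b = (-1 : ℝ)}

/-- Product of the simple reflections s_{α_i} = (i, i+1) for i in a list. -/
def swapProd (idxs : List ℕ) : Equiv.Perm ℕ :=
  (idxs.map (fun i => Equiv.swap i (i + 1))).prod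

/-- The Weyl group element s = s₁s₂ (cases (i)–(iv) according to the parities of
    m = ⌊(l′−1)/2⌋ and l′; here p = l − l′ and s_γ = (m+1, m+p+2)). -/
def weylS (l l' : ℕ) : Equiv.Perm ℕ :=
  let m := (l' - 1) / 2
  let p := l - l'
  if m % 2 = 0 then
    if l' % 2 = 1 then
      -- case (i)
      (swapProd (List.range' 2 (m / 2) 2) * swapProd (List.range' (m + p + 2) (m / 2) 2)) *
        (swapProd (List.range' 1 (m / 2) 2) * Equiv.swap (m + 1) (m + p + 2) *
          swapProd (List.range' (m + p + 3) (m / 2) 2))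
    else
      -- case (ii)
      (swapProd (List.range' 2 (m / 2) 2) * swapProd (List.range' (m + p + 2) (m / 2 + 1) 2)) *
        (swapProd (List.range' 1 (m / 2) 2) * Equiv.swap (m + 1) (m + p + 2) *
          swapProd (List.range' (m + p + 3) (m / 2) 2))
  else
    if l' % 2 = 1 then
      -- case (iii)
      (swapProd (List.range' 1 ((m + 1) / 2) 2) *
          swapProd (List.range' (m + p + 2) ((m + 1) / 2) 2)) *
        (swapProd (List.range' 2 ((m - 1) / 2) 2) * Equiv.swap (m + 1) (m + p + 2) *
          swapProd (List.range' (m + p + 3) ((m - 1) / 2) 2))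
    else
      -- case (iv)
      (swapProd (List.range' 1 ((m + 1) / 2) 2) *
          swapProd (List.range' (m + p + 2) ((m + 1) / 2) 2)) *
        (swapProd (List.range' 2 ((m - 1) / 2) 2) * Equiv.swap (m + 1) (m + p + 2) *
          swapProd (List.range' (m + p + 3) ((m + 1) / 2) 2))

/-- Δ_s = {α ∈ Δ₊ : sα ∈ Δ₋}. -/
def DeltaS (l : ℕ) (s : Equiv.Perm ℕ) : Set V :=
  {v ∈ DeltaPos l | pact s v ∈ DeltaNeg l}

/-- Δ_{s⁻¹} = {α ∈ Δ₊ : s⁻¹α ∈ Δ₋}. -/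
def DeltaSinv (l : ℕ) (s : Equiv.Perm ℕ) : Set V :=
  {v ∈ DeltaPos l | pact s⁻¹ v ∈ DeltaNeg l}

/-- (Δ̄_K)₊ = {α ∈ Δ₊ : sα ≠ α}. -/
def DeltaKpos (l : ℕ) (s : Equiv.Perm ℕ) : Set V :=
  {v ∈ DeltaPos l | pact s v ≠ v}

/-- (Δ̄_K)₋ = −(Δ̄_K)₊. -/
def DeltaKneg (l : ℕ) (s : Equiv.Perm ℕ) : Set V := {v | -v ∈ DeltaKpos l s}

/-- Δ^C = {α ∈ (Δ̄_K)₊ : row(sα) = row(α)}. -/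
def DeltaC (l : ℕ) (s : Equiv.Perm ℕ) : Set V :=
  {v ∈ DeltaKpos l s | rowOf (pact s v) = rowOf v}

/-- Δ^R = {α ∈ (Δ̄_K)₊ : col(sα) = col(α)}. -/
def DeltaR (l : ℕ) (s : Equiv.Perm ℕ) : Set V :=
  {v ∈ DeltaKpos l s | colOf (pact s v) = colOf v}

/-- Δ^O = (Δ̄_K)₊ \ (Δ^C ∪ Δ^R). -/
def DeltaO (l : ℕ) (s : Equiv.Perm ℕ) : Set V :=
  DeltaKpos l s \ (DeltaC l s ∪ DeltaR l s)

/-- Δ₁^O = {α ∈ Δ^O : row(α) ≥ m+p+2}. -/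
def DeltaO1 (l : ℕ) (s : Equiv.Perm ℕ) (m p : ℕ) : Set V :=
  {v ∈ DeltaO l s | m + p + 2 ≤ rowOf v}

/-- Δ₂^O = {α ∈ Δ^O : col(α) ≤ m+1}. -/
def DeltaO2 (l : ℕ) (s : Equiv.Perm ℕ) (m : ℕ) : Set V :=
  {v ∈ DeltaO l s | colOf v ≤ m + 1}

/-- Δ₃^O = Δ^O \ (Δ₁^O ∪ Δ₂^O). -/
def DeltaO3 (l : ℕ) (s : Equiv.Perm ℕ) (m p : ℕ) : Set V :=
  DeltaO l s \ (DeltaO1 l s m p ∪ DeltaO2 l s m)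

/-- Δ̄_K^k = {α ∈ (Δ̄_K)₊ : s^{−j}α ∈ (Δ̄_K)₊ for 1 ≤ j ≤ k−1 and s^{−k}α ∈ (Δ̄_K)₋}. -/
def DeltaKk (l : ℕ) (s : Equiv.Perm ℕ) (k : ℕ) : Set V :=
  {v ∈ DeltaKpos l s |
    (∀ j, 1 ≤ j → j ≤ k - 1 → pact (s⁻¹ ^ j) v ∈ DeltaKpos l s) ∧
      pact (s⁻¹ ^ k) v ∈ DeltaKneg l s}

/-- d(α) = min{k ≥ 1 : s^{−k}α ∈ Δ₋}. -/
def dd (l : ℕ) (s : Equiv.Perm ℕ) (v : V) : ℕ :=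
  sInf {k | 1 ≤ k ∧ pact (s⁻¹ ^ k) v ∈ DeltaNeg l}

/-- Δ_Z = {e_i − e_j : m+2 ≤ i, j ≤ m+p+1, i ≠ j}. -/
def DeltaZ (m p : ℕ) : Set V :=
  {v | ∃ i j, m + 2 ≤ i ∧ i ≤ m + p + 1 ∧ m + 2 ≤ j ∧ j ≤ m + p + 1 ∧ i ≠ j ∧ v = rt i j}

/-- The ⟨s⟩-orbit of a vector. -/
def orbitOf (s : Equiv.Perm ℕ) (v : V) : Set V := {w | ∃ n : ℤ, w = pact (s ^ n) v}

/-- The set P_κ (for κ ∈ Δ̄_K^k). -/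
def Pk (l : ℕ) (s : Equiv.Perm ℕ) (k : ℕ) (κ : V) : Set (V × V) :=
  {q | (∃ i, 2 ≤ i ∧ i ≤ k - 1 ∧ q.1 ∈ DeltaKk l s i) ∧ q.2 ∈ DeltaKk l s k ∧ κ = q.1 + q.2}

/-- The set P′_κ (for κ ∈ Δ̄_K^k). -/
def Pk' (l : ℕ) (s : Equiv.Perm ℕ) (k : ℕ) (κ : V) : Set (V × V) :=
  {q | q.1 ∈ DeltaKk l s k ∧ q.2 ∈ DeltaKk l s k ∧ κ = q.1 + q.2}

/-- The eigenvector v^λ of case (i) (m even, l′ = 2m+1 odd). -/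
def vlam (m p : ℕ) (lam : ℂ) : ℕ → ℂ := fun j =>
  if j = 0 then 0
  else if j ≤ m + 1 then
    (if j % 2 = 1 then lam ^ ((4 * m + 5 - j) / 2) else lam ^ (j / 2))
  else if j ≤ m + p + 1 then 0
  else if j ≤ m + p + m + 2 then
    (if (j - (m + p)) % 2 = 0 then lam ^ ((m + (j - (m + p))) / 2)
     else lam ^ ((3 * m + 5 - (j - (m + p))) / 2))
  else 0


lemma sp_eval : ∀ (kk a x : ℕ), swapProd (List.range' a kk 2) x =
    if a ≤ x ∧ x < a + 2*kk then (if (x-a) % 2 = 0 then x+1 else x-1) else x := by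
  intro kk
  induction kk with
  | zero =>
    intro a x
    rw [if_neg (by omega)]
    simp [swapProd]
  | succ kk ih =>
    intro a x
    rw [List.range'_succ]
    simp only [swapProd, List.map_cons, List.prod_cons]
    rw [Equiv.Perm.mul_apply]
    show Equiv.swap a (a+1) (swapProd (List.range' (a+2) kk 2) x) = _
    rw [ih]
    by_cases h1 : a+2 ≤ x ∧ x < a+2+2*kk
    · rw [if_pos h1]
      by_cases h2 : (x - (a+2)) % 2 = 0
      · rw [if_pos h2, Equiv.swap_apply_of_ne_of_ne (by omega) (by omega),
          if_pos (by omega), if_pos (by omega)]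
      · rw [if_neg h2, Equiv.swap_apply_of_ne_of_ne (by omega) (by omega),
          if_pos (by omega), if_neg (by omega)]
    · rw [if_neg h1]
      rcases eq_or_ne x a with rfl | hxa
      · rw [Equiv.swap_apply_left, if_pos (by omega), if_pos (by omega)]
      · rcases eq_or_ne x (a+1) with rfl | hxb
        · rw [Equiv.swap_apply_right, if_pos (by omega), if_neg (by omega)]; omega
        · rw [Equiv.swap_apply_of_ne_of_ne hxa hxb, if_neg (by omega)]

/-- Closed form for the permutation `weylS l l'`. -/
def sfun (l m p Rs x : ℕ) : ℕ :=
  if 1 ≤ x ∧ x ≤ m+1 then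
    (if (m+x) % 2 = 1 then (if x = m+1 then m+p+3 else x+2)
     else (if 3 ≤ x then x-2 else 3-x))
  else if m+p+2 ≤ x ∧ x ≤ l+1 then
    (if x = m+p+2 then m
     else if (x-(m+p+1)) % 2 = 0 then
       (if x-(m+p+1)+2 ≤ Rs then x+2 else if x-(m+p+1) < Rs then x+1 else x-1)
     else x-2)
  else x
set_option maxHeartbeats 1000000 in
lemma master1 (l l' m p Rs : ℕ) (h5 : 5 ≤ l') (hll : l' ≤ l)
    (hm : m = (l' - 1) / 2) (hp : p = l - l') (hRs : Rs = l' - m)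
    (h : l' = 2*m+1) (c : ℕ) (hc : m = c + c) (x : ℕ) :
    weylS l l' x = sfun l m p Rs x := by
  have hm2 : 2 ≤ m := by omega
  simp only [weylS]
  rw [← hm, ← hp]
  rw [if_pos (by omega : m % 2 = 0), if_pos (by omega : l' % 2 = 1)]
  simp only [Equiv.Perm.mul_apply]
  rw [sp_eval (m/2) (m+p+3)]
  split_ifs <;> first | omega |
  (rw [Equiv.swap_apply_def]; split_ifs <;> first | omega |
   (rw [sp_eval (m/2) 1]; split_ifs <;> first | omega |
    (rw [sp_eval (m/2) (m+p+2)]; split_ifs <;> first | omega |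
     (rw [sp_eval (m/2) 2]; split_ifs <;> first | omega |
      (simp only [sfun]; split_ifs <;> omega)))))


set_option maxHeartbeats 1000000 in
lemma master2 (l l' m p Rs : ℕ) (h5 : 5 ≤ l') (hll : l' ≤ l)
    (hm : m = (l' - 1) / 2) (hp : p = l - l') (hRs : Rs = l' - m)
    (h : l' = 2*m+2) (c : ℕ) (hc : m = c + c) (x : ℕ) :
    weylS l l' x = sfun l m p Rs x := by
  have hm2 : 2 ≤ m := by omega
  simp only [weylS]
  rw [← hm, ← hp]
  rw [if_pos (by omega : m % 2 = 0), if_neg (by omega : ¬ l' % 2 = 1)]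
  simp only [Equiv.Perm.mul_apply]
  rw [sp_eval (m/2) (m+p+3)]
  split_ifs <;> first | omega |
  (rw [Equiv.swap_apply_def]; split_ifs <;> first | omega |
   (rw [sp_eval (m/2) 1]; split_ifs <;> first | omega |
    (rw [sp_eval (m/2+1) (m+p+2)]; split_ifs <;> first | omega |
     (rw [sp_eval (m/2) 2]; split_ifs <;> first | omega |
      (simp only [sfun]; split_ifs <;> omega)))))


set_option maxHeartbeats 1000000 in
lemma master3 (l l' m p Rs : ℕ) (h5 : 5 ≤ l') (hll : l' ≤ l)
    (hm : m = (l' - 1) / 2) (hp : p = l - l') (hRs : Rs = l' - m)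
    (h : l' = 2*m+1) (c : ℕ) (hc : m = c + c + 1) (x : ℕ) :
    weylS l l' x = sfun l m p Rs x := by
  have hm2 : 2 ≤ m := by omega
  simp only [weylS]
  rw [← hm, ← hp]
  rw [if_neg (by omega : ¬ m % 2 = 0), if_pos (by omega : l' % 2 = 1)]
  simp only [Equiv.Perm.mul_apply]
  rw [sp_eval ((m-1)/2) (m+p+3)]
  split_ifs <;> first | omega |
  (rw [Equiv.swap_apply_def]; split_ifs <;> first | omega |
   (rw [sp_eval ((m-1)/2) 2]; split_ifs <;> first | omega |
    (rw [sp_eval ((m+1)/2) (m+p+2)]; split_ifs <;> first | omega |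
     (rw [sp_eval ((m+1)/2) 1]; split_ifs <;> first | omega |
      (simp only [sfun]; split_ifs <;> omega)))))


set_option maxHeartbeats 1000000 in
lemma master4 (l l' m p Rs : ℕ) (h5 : 5 ≤ l') (hll : l' ≤ l)
    (hm : m = (l' - 1) / 2) (hp : p = l - l') (hRs : Rs = l' - m)
    (h : l' = 2*m+2) (c : ℕ) (hc : m = c + c + 1) (x : ℕ) :
    weylS l l' x = sfun l m p Rs x := by
  have hm2 : 2 ≤ m := by omega
  simp only [weylS]
  rw [← hm, ← hp]
  rw [if_neg (by omega : ¬ m % 2 = 0), if_neg (by omega : ¬ l' % 2 = 1)]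
  simp only [Equiv.Perm.mul_apply]
  rw [sp_eval ((m+1)/2) (m+p+3)]
  split_ifs <;> first | omega |
  (rw [Equiv.swap_apply_def]; split_ifs <;> first | omega |
   (rw [sp_eval ((m-1)/2) 2]; split_ifs <;> first | omega |
    (rw [sp_eval ((m+1)/2) (m+p+2)]; split_ifs <;> first | omega |
     (rw [sp_eval ((m+1)/2) 1]; split_ifs <;> first | omega |
      (simp only [sfun]; split_ifs <;> omega)))))


lemma master (l l' m p Rs : ℕ) (h5 : 5 ≤ l') (hll : l' ≤ l)
    (hm : m = (l' - 1) / 2) (hp : p = l - l') (hRs : Rs = l' - m) (x : ℕ) :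
    weylS l l' x = sfun l m p Rs x := by
  have hl' : l' = 2*m+1 ∨ l' = 2*m+2 := by omega
  rcases hl' with h | h
  · rcases Nat.even_or_odd m with ⟨c, hc⟩ | ⟨c, hc⟩
    · exact master1 l l' m p Rs h5 hll hm hp hRs h c hc x
    · exact master3 l l' m p Rs h5 hll hm hp hRs h c (by omega) x
  · rcases Nat.even_or_odd m with ⟨c, hc⟩ | ⟨c, hc⟩
    · exact master2 l l' m p Rs h5 hll hm hp hRs h c hc x
    · exact master4 l l' m p Rs h5 hll hm hp hRs h c (by omega) x
/-- parametrization of the cycle of s -/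
def ffn (m p Rs t : ℕ) : ℕ :=
  if t < Rs then (if 2*t+2 ≤ Rs then m+p+3+2*t else m+p+2*(Rs-t))
  else (if 2*(t-Rs) < m then m - 2*(t-Rs) else 2*(t-Rs)+1-m)

section ffn
variable {m p Rs : ℕ} (hm2 : 2 ≤ m) (hRs : Rs = m+1 ∨ Rs = m+2)

lemma ff_R {t : ℕ} (h : t < Rs) : m+p+2 ≤ ffn m p Rs t ∧ ffn m p Rs t ≤ m+p+1+Rs := by
  simp only [ffn]; split_ifs <;> omega

lemma ff_L {t : ℕ} (h1 : Rs ≤ t) (h2 : t < m+1+Rs) :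
    1 ≤ ffn m p Rs t ∧ ffn m p Rs t ≤ m+1 := by
  simp only [ffn]; split_ifs <;> omega

lemma ff_inj {t₁ t₂ : ℕ} (h1 : t₁ < m+1+Rs) (h2 : t₂ < m+1+Rs)
    (h : ffn m p Rs t₁ = ffn m p Rs t₂) : t₁ = t₂ := by
  revert h; simp only [ffn]; split_ifs <;> omega

lemma ff_val0 (hm2 : 2 ≤ m) (hRs : Rs = m+1 ∨ Rs = m+2) : ffn m p Rs 0 = m+p+3 := by
  simp only [ffn]; split_ifs <;> omega

lemma ff_valRs1 (hm2 : 2 ≤ m) (hRs : Rs = m+1 ∨ Rs = m+2) : ffn m p Rs (Rs-1) = m+p+2 := by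
  simp only [ffn]; split_ifs <;> omega

lemma ff_valRs (hm2 : 2 ≤ m) (hRs : Rs = m+1 ∨ Rs = m+2) : ffn m p Rs Rs = m := by
  simp only [ffn]; split_ifs <;> omega

lemma ff_valLast (hm2 : 2 ≤ m) (hRs : Rs = m+1 ∨ Rs = m+2) : ffn m p Rs (m+Rs) = m+1 := by
  simp only [ffn]; split_ifs <;> omega

lemma ff_ex {x : ℕ} (hx : (1 ≤ x ∧ x ≤ m+1) ∨ (m+p+2 ≤ x ∧ x ≤ m+p+1+Rs)) :
    ∃ t, t < m+1+Rs ∧ ffn m p Rs t = x := by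
  rcases hx with ⟨h1, h2⟩ | ⟨h1, h2⟩
  · rcases Nat.even_or_odd (m+x) with ⟨c, hc⟩ | ⟨c, hc⟩
    · exact ⟨Rs + (c - x), by omega, by simp only [ffn]; split_ifs <;> omega⟩
    · exact ⟨Rs + c, by omega, by simp only [ffn]; split_ifs <;> omega⟩
  · rcases Nat.even_or_odd (x - (m+p+1)) with ⟨c, hc⟩ | ⟨c, hc⟩
    · exact ⟨c - 1, by omega, by simp only [ffn]; split_ifs <;> omega⟩
    · exact ⟨Rs - (c+1), by omega, by simp only [ffn]; split_ifs <;> omega⟩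

end ffn

lemma rt_inj {i j i' j' : ℕ} (hij : i ≠ j) (h : rt i j = rt i' j') : i = i' ∧ j = j' := by
  have h1 := congrFun h i
  have h2 := congrFun h j
  simp only [rt, evec, Pi.sub_apply] at h1 h2
  split_ifs at h1 h2 <;> (try norm_num at h1) <;> (try norm_num at h2) <;> omega

lemma neg_rt (i j : ℕ) : -(rt i j) = rt j i := by
  funext x; simp only [rt, evec, Pi.sub_apply, Pi.neg_apply]; ring

lemma pact_rt (σ : Equiv.Perm ℕ) (i j : ℕ) : pact σ (rt i j) = rt (σ i) (σ j) := by
  funext x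
  have h1 : (σ⁻¹ x = i) = (x = σ i) := propext
    ⟨fun h => by rw [← h, Equiv.Perm.coe_inv, Equiv.apply_symm_apply], fun h => by rw [h, Equiv.Perm.coe_inv, Equiv.symm_apply_apply]⟩
  have h2 : (σ⁻¹ x = j) = (x = σ j) := propext
    ⟨fun h => by rw [← h, Equiv.Perm.coe_inv, Equiv.apply_symm_apply], fun h => by rw [h, Equiv.Perm.coe_inv, Equiv.symm_apply_apply]⟩
  simp only [pact, rt, evec, Pi.sub_apply, h1, h2]

lemma row_rt {i j : ℕ} (h : i ≠ j) : rowOf (rt i j) = i := by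
  have : {a | rt i j a = 1} = {i} := by
    ext x
    simp only [rt, evec, Pi.sub_apply, Set.mem_setOf_eq, Set.mem_singleton_iff]
    split_ifs <;> norm_num <;> omega
  rw [rowOf, this, csInf_singleton]

lemma col_rt {i j : ℕ} (h : i ≠ j) : colOf (rt i j) = j := by
  have : {b | rt i j b = (-1 : ℝ)} = {j} := by
    ext x
    simp only [rt, evec, Pi.sub_apply, Set.mem_setOf_eq, Set.mem_singleton_iff]
    split_ifs <;> norm_num <;> omega
  rw [colOf, this, csInf_singleton]

lemma evec_sub_inj {x y z w : ℕ} (hxy : x ≠ y) (h : evec x - evec y = evec z - evec w) :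
    x = z ∧ y = w := by
  have h1 := congrFun h x
  have h2 := congrFun h y
  simp only [evec, Pi.sub_apply] at h1 h2
  split_ifs at h1 h2 <;> (try norm_num at h1) <;> (try norm_num at h2) <;> omega

lemma rt_ne_zero {i j : ℕ} (hij : i ≠ j) : rt i j ≠ 0 := by
  intro h
  have := congrFun h i
  simp only [rt, evec, Pi.sub_apply, Pi.zero_apply] at this
  split_ifs at this <;> norm_num at this <;> omega

lemma decomp {a b a₁ b₁ a₂ b₂ : ℕ} (hab : a ≠ b) (h1 : a₁ ≠ b₁) (h2 : a₂ ≠ b₂)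
    (h : rt a b = rt a₁ b₁ + rt a₂ b₂) :
    (a₁ = a ∧ b₁ = a₂ ∧ b₂ = b) ∨ (a₂ = a ∧ b₂ = a₁ ∧ b₁ = b) := by
  by_cases hc : a₁ = a
  · left
    refine ⟨hc, ?_⟩
    subst hc
    have key : evec b₁ - evec b = evec a₂ - evec b₂ := by
      simp only [rt] at h; linear_combination h
    by_cases hbb : b₁ = b
    · exfalso
      subst hbb
      have hz := congrFun key a₂
      simp only [evec, Pi.sub_apply] at hz
      split_ifs at hz <;> norm_num at hz <;> omega
    · obtain ⟨hA, hB⟩ := evec_sub_inj hbb key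
      exact ⟨hA, hB.symm⟩
  · right
    have ha2 : a₂ = a := by
      have h3 := congrFun h a
      simp only [rt, evec, Pi.sub_apply, Pi.add_apply] at h3
      split_ifs at h3 <;> norm_num at h3 <;> omega
    refine ⟨ha2, ?_⟩
    subst ha2
    have key : evec b₂ - evec b = evec a₁ - evec b₁ := by
      simp only [rt] at h; linear_combination h
    by_cases hbb : b₂ = b
    · exfalso
      subst hbb
      have hz := congrFun key a₁
      simp only [evec, Pi.sub_apply] at hz
      split_ifs at hz <;> norm_num at hz <;> omega
    · obtain ⟨hA, hB⟩ := evec_sub_inj hbb key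
      exact ⟨hA, hB.symm⟩

lemma kpos_bounds {l : ℕ} {s : Equiv.Perm ℕ} {X Y : ℕ} (hXY : X ≠ Y)
    (h : rt X Y ∈ DeltaKpos l s) : 1 ≤ X ∧ X < Y ∧ Y ≤ l+1 := by
  obtain ⟨⟨x, y, h1, h2, h3, heq⟩, -⟩ := h
  obtain ⟨rfl, rfl⟩ := rt_inj hXY heq
  exact ⟨h1, h2, h3⟩

lemma kneg_bounds {l : ℕ} {s : Equiv.Perm ℕ} {X Y : ℕ} (hXY : X ≠ Y)
    (h : rt X Y ∈ DeltaKneg l s) : 1 ≤ Y ∧ Y < X ∧ X ≤ l+1 := by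
  have h' : rt Y X ∈ DeltaKpos l s := by
    have : -(rt X Y) ∈ DeltaKpos l s := h
    rwa [neg_rt] at this
  exact kpos_bounds (Ne.symm hXY) h'

lemma fixed_pow {σ : Equiv.Perm ℕ} {x : ℕ} (h : σ x = x) : ∀ j, (σ⁻¹ ^ j) x = x := by
  have hinv : σ⁻¹ x = x := by rw [← h, Equiv.Perm.coe_inv, Equiv.symm_apply_apply, h]
  intro j
  induction j with
  | zero => simp
  | succ j ih => rw [pow_succ, Equiv.Perm.mul_apply, hinv, ih]


section perm

variable {l l' m p Rs : ℕ}



variable (h5 : 5 ≤ l') (hll : l' ≤ l) (hm : m = (l' - 1) / 2) (hp : p = l - l')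
  (hRs : Rs = l' - m)

include h5 hll hm hp hRs

lemma s_fix {x : ℕ} (hx : ¬((1 ≤ x ∧ x ≤ m+1) ∨ (m+p+2 ≤ x ∧ x ≤ l+1))) :
    weylS l l' x = x := by
  rw [master l l' m p Rs h5 hll hm hp hRs x]
  simp only [sfun]; split_ifs <;> omega

lemma s_move {x : ℕ} (hx : (1 ≤ x ∧ x ≤ m+1) ∨ (m+p+2 ≤ x ∧ x ≤ l+1)) :
    weylS l l' x ≠ x := by
  rw [master l l' m p Rs h5 hll hm hp hRs x]
  simp only [sfun]; split_ifs <;> omega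

set_option maxHeartbeats 2000000 in
lemma s_ff_lt {t : ℕ} (h : t + 1 < m+1+Rs) :
    weylS l l' (ffn m p Rs t) = ffn m p Rs (t+1) := by
  rw [master l l' m p Rs h5 hll hm hp hRs]
  simp only [sfun, ffn]; split_ifs <;> omega

set_option maxHeartbeats 2000000 in
lemma s_ff_wrap : weylS l l' (ffn m p Rs (m+Rs)) = ffn m p Rs 0 := by
  rw [master l l' m p Rs h5 hll hm hp hRs]
  simp only [sfun, ffn]; split_ifs <;> omega

lemma sinv_ff {t : ℕ} (h : t + 1 < m+1+Rs) :
    (weylS l l')⁻¹ (ffn m p Rs (t+1)) = ffn m p Rs t := by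
  rw [← s_ff_lt h5 hll hm hp hRs h, Equiv.Perm.coe_inv, Equiv.symm_apply_apply]

lemma sinv_ff0 : (weylS l l')⁻¹ (ffn m p Rs 0) = ffn m p Rs (m+Rs) := by
  rw [← s_ff_wrap h5 hll hm hp hRs, Equiv.Perm.coe_inv, Equiv.symm_apply_apply]

lemma iterA : ∀ (j u : ℕ), j ≤ u → u < m+1+Rs →
    ((weylS l l')⁻¹ ^ j) (ffn m p Rs u) = ffn m p Rs (u - j) := by
  intro j
  induction j with
  | zero => intro u _ _; simp
  | succ j ih =>
    intro u hj hu
    rw [pow_succ, Equiv.Perm.mul_apply]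
    obtain ⟨u', rfl⟩ : ∃ u', u = u' + 1 := ⟨u - 1, by omega⟩
    rw [sinv_ff h5 hll hm hp hRs hu, ih u' (by omega) (by omega)]
    congr 1; omega

lemma iterB : ∀ (j u : ℕ), u < m+1+Rs → u < j → j ≤ u + (m+1+Rs) →
    ((weylS l l')⁻¹ ^ j) (ffn m p Rs u) = ffn m p Rs (u + (m+1+Rs) - j) := by
  intro j u hu hj1 hj2
  obtain ⟨j', rfl⟩ : ∃ j', j = (u + 1) + j' := ⟨j - u - 1, by omega⟩
  rw [add_comm (u+1) j', pow_add, Equiv.Perm.mul_apply]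
  rw [pow_succ', Equiv.Perm.mul_apply,
    iterA h5 hll hm hp hRs u u le_rfl hu, Nat.sub_self,
    sinv_ff0 h5 hll hm hp hRs, iterA h5 hll hm hp hRs j' (m+Rs) (by omega) (by omega)]
  congr 1; omega

end perm

/-- for k ≥ 2, if η, η₁ ∈ Δ̄_K^k, η₂ ∈ (Δ̄_K)₊ and η = η₁ + η₂, then
η ∈ Δ^O. -/
theorem stmt13 (l l' m p : ℕ) (h5 : 5 ≤ l') (hll : l' ≤ l)
    (hm : m = (l' - 1) / 2) (hp : p = l - l') :
    let s := weylS l l'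
    ∀ k, 2 ≤ k → ∀ η ∈ DeltaKk l s k, ∀ η₁ ∈ DeltaKk l s k, ∀ η₂ ∈ DeltaKpos l s,
      η = η₁ + η₂ → η ∈ DeltaO l s := by
  intro s k hk η hη η₁ hη₁ η₂ hη₂ hsum
  set Rs := l' - m with hRs
  have hm2 : 2 ≤ m := by omega
  have hRs' : Rs = m+1 ∨ Rs = m+2 := by omega
  have hl1 : l + 1 = m+p+1+Rs := by omega
  -- destructure memberships
  obtain ⟨⟨hposη, hmovη⟩, hitη, hnegη⟩ := hη
  obtain ⟨a, b, ha1, hab, hbl, hETA⟩ := hposη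
  subst hETA
  obtain ⟨⟨hposη₁, hmovη₁⟩, hitη₁, hnegη₁⟩ := hη₁
  obtain ⟨a₁, b₁, ha1₁, hab₁, hbl₁, hETA1⟩ := hposη₁
  subst hETA1
  obtain ⟨⟨a₂, b₂, ha1₂, hab₂, hbl₂, hETA2⟩, hmovη₂⟩ := hη₂
  subst hETA2
  have hne : a ≠ b := by omega
  have hne1 : a₁ ≠ b₁ := by omega
  have hne2 : a₂ ≠ b₂ := by omega
  -- instantiated helpers
  have smove : ∀ x : ℕ, (1 ≤ x ∧ x ≤ m+1) ∨ (m+p+2 ≤ x ∧ x ≤ l+1) → s x ≠ x :=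
    fun x hx => s_move h5 hll hm hp hRs hx
  have sfix : ∀ x : ℕ, ¬((1 ≤ x ∧ x ≤ m+1) ∨ (m+p+2 ≤ x ∧ x ≤ l+1)) → s x = x :=
    fun x hx => s_fix h5 hll hm hp hRs hx
  have sItA : ∀ j u : ℕ, j ≤ u → u < m+1+Rs →
      (s⁻¹ ^ j) (ffn m p Rs u) = ffn m p Rs (u - j) :=
    fun j u h1 h2 => iterA h5 hll hm hp hRs j u h1 h2
  have sItB : ∀ j u : ℕ, u < m+1+Rs → u < j → j ≤ u + (m+1+Rs) →
      (s⁻¹ ^ j) (ffn m p Rs u) = ffn m p Rs (u + (m+1+Rs) - j) :=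
    fun j u h1 h2 h3 => iterB h5 hll hm hp hRs j u h1 h2 h3
  have extractPos : ∀ (σ : Equiv.Perm ℕ) (X Y : ℕ), X ≠ Y →
      pact σ (rt X Y) ∈ DeltaKpos l s → 1 ≤ σ X ∧ σ X < σ Y ∧ σ Y ≤ l+1 := by
    intro σ X Y hXY h
    rw [pact_rt] at h
    exact kpos_bounds (fun he => hXY (σ.injective he)) h
  have extractNeg : ∀ (σ : Equiv.Perm ℕ) (X Y : ℕ), X ≠ Y →
      pact σ (rt X Y) ∈ DeltaKneg l s → 1 ≤ σ Y ∧ σ Y < σ X ∧ σ X ≤ l+1 := by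
    intro σ X Y hXY h
    rw [pact_rt] at h
    exact kneg_bounds (fun he => hXY (σ.injective he)) h
  -- the key claim
  have key : s a ≠ a ∧ s b ≠ b := by
    by_cases hA : s a = a
    · exfalso
      by_cases hB : s b = b
      · -- both fixed: contradicts movedness of η
        apply hmovη
        rw [pact_rt, hA, hB]
      · -- CASE A : a fixed, b moved
        have haF : m+2 ≤ a ∧ a ≤ m+p+1 := by
          by_contra hcon
          exact smove a (by omega) hA
        have hbN : (1 ≤ b ∧ b ≤ m+1) ∨ (m+p+2 ≤ b ∧ b ≤ l+1) := by
          by_contra hcon; exact hB (sfix b hcon)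
        obtain ⟨u, hun, hub⟩ := ff_ex (m := m) (p := p) (Rs := Rs) (x := b)
          (Or.inr ⟨by omega, by omega⟩)
        have huR : u < Rs := by
          by_contra hcon
          have := ff_L (m := m) (p := p) (Rs := Rs) (le_of_not_gt hcon) hun
          omega
        have hafix : ∀ j, (s⁻¹ ^ j) a = a := fixed_pow hA
        -- pinning the crossing time
        have pinA : ∀ (Y w' : ℕ), w' < Rs → ffn m p Rs w' = Y →
            (∀ j, 1 ≤ j → j ≤ k-1 → a < (s⁻¹ ^ j) Y) → ((s⁻¹ ^ k) Y < a) → k = w' + 1 := by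
          intro Y w' hw' hwY hit hneg
          rcases lt_trichotomy k (w'+1) with hlt | heq | hgt
          · exfalso
            have e : (s⁻¹ ^ k) Y = ffn m p Rs (w' - k) := by
              rw [← hwY]; exact sItA k w' (by omega) (by omega)
            have h2 := (ff_R (m := m) (p := p) (Rs := Rs) (t := w'-k) (by omega)).1
            rw [e] at hneg; omega
          · exact heq
          · exfalso
            have e : (s⁻¹ ^ (w'+1)) Y = ffn m p Rs (m+Rs) := by
              rw [← hwY, sItB (w'+1) w' (by omega) (by omega) (by omega)]
              congr 1; omega
            have h := hit (w'+1) (by omega) (by omega)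
            rw [e, ff_valLast hm2 hRs'] at h
            omega
        have itb : ∀ j, 1 ≤ j → j ≤ k - 1 → a < (s⁻¹ ^ j) b := by
          intro j h1 h2
          have h := extractPos _ a b hne (hitη j h1 h2)
          rw [hafix j] at h
          exact h.2.1
        have negb : (s⁻¹ ^ k) b < a := by
          have h := extractNeg _ a b hne hnegη
          rw [hafix k] at h
          exact h.2.1
        have hk_eq : k = u + 1 := pinA b u huR hub itb negb
        -- decomposition
        rcases decomp hne hne1 hne2 hsum with ⟨hD1, hD2, hD3⟩ | ⟨hD1, hD2, hD3⟩
        · -- A1 : η₁ = rt a b₁, η₂ = rt b₁ b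
          have hs1 : a = a₁ := hD1.symm
          subst hs1
          have hmc : s b₁ ≠ b₁ := by
            intro hfix
            apply hmovη₁
            rw [pact_rt, hA, hfix]
          have hcN : (1 ≤ b₁ ∧ b₁ ≤ m+1) ∨ (m+p+2 ≤ b₁ ∧ b₁ ≤ l+1) := by
            by_contra hcon; exact hmc (sfix b₁ hcon)
          obtain ⟨w, hwn, hwc⟩ := ff_ex (m := m) (p := p) (Rs := Rs) (x := b₁)
            (Or.inr ⟨by omega, by omega⟩)
          have hwR : w < Rs := by
            by_contra hcon
            have := ff_L (m := m) (p := p) (Rs := Rs) (le_of_not_gt hcon) hwn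
            omega
          have itc : ∀ j, 1 ≤ j → j ≤ k - 1 → a < (s⁻¹ ^ j) b₁ := by
            intro j h1 h2
            have h := extractPos _ a b₁ hne1 (hitη₁ j h1 h2)
            rw [hafix j] at h
            exact h.2.1
          have negc : (s⁻¹ ^ k) b₁ < a := by
            have h := extractNeg _ a b₁ hne1 hnegη₁
            rw [hafix k] at h
            exact h.2.1
          have hk_eq2 : k = w + 1 := pinA b₁ w hwR hwc itc negc
          have hcb : b₁ = b := by
            rw [← hwc, ← hub]; congr 1; omega
          omega
        · -- A2 : η₂ = rt a a₁, η₁ = rt a₁ b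
          have hs1 : a = a₂ := hD1.symm
          subst hs1
          have hs2 : a₁ = b₂ := hD2.symm
          subst hs2
          have hs3 : b = b₁ := hD3.symm
          subst hs3
          have hmc : s a₁ ≠ a₁ := by
            intro hfix
            apply hmovη₂
            rw [pact_rt, hA, hfix]
          have hcN : (1 ≤ a₁ ∧ a₁ ≤ m+1) ∨ (m+p+2 ≤ a₁ ∧ a₁ ≤ l+1) := by
            by_contra hcon; exact hmc (sfix a₁ hcon)
          obtain ⟨w, hwn, hwc⟩ := ff_ex (m := m) (p := p) (Rs := Rs) (x := a₁)
            (Or.inr ⟨by omega, by omega⟩)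
          have hwR : w < Rs := by
            by_contra hcon
            have := ff_L (m := m) (p := p) (Rs := Rs) (le_of_not_gt hcon) hwn
            omega
          have itcb : ∀ j, 1 ≤ j → j ≤ k - 1 → (s⁻¹ ^ j) a₁ < (s⁻¹ ^ j) b := by
            intro j h1 h2
            exact (extractPos _ a₁ b hne1 (hitη₁ j h1 h2)).2.1
          have negcb : (s⁻¹ ^ k) b < (s⁻¹ ^ k) a₁ :=
            (extractNeg _ a₁ b hne1 hnegη₁).2.1
          have hbk1 : (s⁻¹ ^ (k-1)) b = ffn m p Rs 0 := by
            rw [← hub, sItA (k-1) u (by omega) hun]; congr 1; omega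
          have hbk : (s⁻¹ ^ k) b = ffn m p Rs (m+Rs) := by
            rw [← hub, sItB k u hun (by omega) (by omega)]; congr 1; omega
          rcases le_or_gt k w with hcase | hcase
          · have e1 : (s⁻¹ ^ (k-1)) a₁ = ffn m p Rs (w - (k-1)) := by
              rw [← hwc]; exact sItA (k-1) w (by omega) hwn
            have h1 := itcb (k-1) (by omega) (by omega)
            rw [e1, hbk1, ff_val0 hm2 hRs'] at h1
            have h2 := (ff_R (m := m) (p := p) (Rs := Rs) (t := w - (k-1)) (by omega)).1
            have h3 : ffn m p Rs (w - (k-1)) = ffn m p Rs (Rs - 1) := by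
              rw [ff_valRs1 hm2 hRs']; omega
            have h4 := ff_inj (m := m) (p := p) (Rs := Rs) (by omega) (by omega) h3
            omega
          · have e2 : (s⁻¹ ^ k) a₁ = ffn m p Rs (w + (m+1+Rs) - k) := by
              rw [← hwc]; exact sItB k w hwn hcase (by omega)
            rw [e2, hbk, ff_valLast hm2 hRs'] at negcb
            have hpos : w + (m+1+Rs) - k < Rs := by
              by_contra hcon
              have := ff_L (m := m) (p := p) (Rs := Rs) (le_of_not_gt hcon) (by omega)
              omega
            have hb_val : b = m+p+2 := by
              rw [← hub, show u = Rs - 1 by omega, ff_valRs1 hm2 hRs']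
            have hc_val : a₁ = m+p+3 := by
              rw [← hwc, show w = 0 by omega, ff_val0 hm2 hRs']
            omega
    · by_cases hB : s b = b
      · -- CASE B : a moved, b fixed
        exfalso
        have hbF : m+2 ≤ b ∧ b ≤ m+p+1 := by
          by_contra hcon
          exact smove b (by omega) hB
        have haN : (1 ≤ a ∧ a ≤ m+1) ∨ (m+p+2 ≤ a ∧ a ≤ l+1) := by
          by_contra hcon; exact hA (sfix a hcon)
        obtain ⟨u, hun, hua⟩ := ff_ex (m := m) (p := p) (Rs := Rs) (x := a)
          (Or.inl ⟨by omega, by omega⟩)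
        have huL : Rs ≤ u := by
          by_contra hcon
          have := ff_R (m := m) (p := p) (Rs := Rs) (t := u) (by omega)
          omega
        have hbfix : ∀ j, (s⁻¹ ^ j) b = b := fixed_pow hB
        have pinB : ∀ (X w' : ℕ), Rs ≤ w' → w' < m+1+Rs → ffn m p Rs w' = X →
            (∀ j, 1 ≤ j → j ≤ k-1 → (s⁻¹ ^ j) X < b) → (b < (s⁻¹ ^ k) X) →
            k = w' - Rs + 1 := by
          intro X w' hw1 hw2 hwX hit hneg
          rcases lt_trichotomy k (w' - Rs + 1) with hlt | heq | hgt
          · exfalso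
            have e : (s⁻¹ ^ k) X = ffn m p Rs (w' - k) := by
              rw [← hwX]; exact sItA k w' (by omega) hw2
            have h2 := ff_L (m := m) (p := p) (Rs := Rs) (t := w'-k) (by omega) (by omega)
            rw [e] at hneg; omega
          · exact heq
          · exfalso
            have e : (s⁻¹ ^ (w' - Rs + 1)) X = ffn m p Rs (Rs - 1) := by
              rw [← hwX, sItA (w' - Rs + 1) w' (by omega) hw2]; congr 1; omega
            have h := hit (w' - Rs + 1) (by omega) (by omega)
            rw [e, ff_valRs1 hm2 hRs'] at h
            omega
        have ita : ∀ j, 1 ≤ j → j ≤ k - 1 → (s⁻¹ ^ j) a < b := by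
          intro j h1 h2
          have h := extractPos _ a b hne (hitη j h1 h2)
          rw [hbfix j] at h
          exact h.2.1
        have nega : b < (s⁻¹ ^ k) a := by
          have h := extractNeg _ a b hne hnegη
          rw [hbfix k] at h
          exact h.2.1
        have hk_eq : k = u - Rs + 1 := pinB a u huL hun hua ita nega
        have hkm : k ≤ m+1 := by omega
        rcases decomp hne hne1 hne2 hsum with ⟨hD1, hD2, hD3⟩ | ⟨hD1, hD2, hD3⟩
        · -- B1 : η₁ = rt a b₁, η₂ = rt b₁ b
          have hs1 : a = a₁ := hD1.symm
          subst hs1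
          subst hD2
          have hs3 : b = b₂ := hD3.symm
          subst hs3
          have hmc : s b₁ ≠ b₁ := by
            intro hfix
            apply hmovη₂
            rw [pact_rt, hfix, hB]
          have hcN : (1 ≤ b₁ ∧ b₁ ≤ m+1) ∨ (m+p+2 ≤ b₁ ∧ b₁ ≤ l+1) := by
            by_contra hcon; exact hmc (sfix b₁ hcon)
          obtain ⟨w, hwn, hwc⟩ := ff_ex (m := m) (p := p) (Rs := Rs) (x := b₁)
            (Or.inl ⟨by omega, by omega⟩)
          have hwL : Rs ≤ w := by
            by_contra hcon
            have := ff_R (m := m) (p := p) (Rs := Rs) (t := w) (by omega)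
            omega
          have itac : ∀ j, 1 ≤ j → j ≤ k - 1 → (s⁻¹ ^ j) a < (s⁻¹ ^ j) b₁ := by
            intro j h1 h2
            exact (extractPos _ a b₁ hne1 (hitη₁ j h1 h2)).2.1
          have negac : (s⁻¹ ^ k) b₁ < (s⁻¹ ^ k) a :=
            (extractNeg _ a b₁ hne1 hnegη₁).2.1
          have eak1 : (s⁻¹ ^ (k-1)) a = ffn m p Rs Rs := by
            rw [← hua, sItA (k-1) u (by omega) hun]; congr 1; omega
          have eak : (s⁻¹ ^ k) a = ffn m p Rs (Rs - 1) := by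
            rw [← hua, sItA k u (by omega) hun]; congr 1; omega
          have hkw : k ≤ w := by omega
          have ec1 : (s⁻¹ ^ (k-1)) b₁ = ffn m p Rs (w - (k-1)) := by
            rw [← hwc]; exact sItA (k-1) w (by omega) hwn
          have ec : (s⁻¹ ^ k) b₁ = ffn m p Rs (w - k) := by
            rw [← hwc]; exact sItA k w hkw hwn
          have h1 := itac (k-1) (by omega) (by omega)
          rw [eak1, ec1, ff_valRs hm2 hRs'] at h1
          rw [eak, ec, ff_valRs1 hm2 hRs'] at negac
          have hwk : Rs ≤ w - k := by
            by_contra hcon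
            have := ff_R (m := m) (p := p) (Rs := Rs) (t := w-k) (by omega)
            omega
          have hL2 := ff_L (m := m) (p := p) (Rs := Rs) (t := w-(k-1)) (by omega) (by omega)
          have h3 : ffn m p Rs (w-(k-1)) = ffn m p Rs (m+Rs) := by
            rw [ff_valLast hm2 hRs']; omega
          have h4 := ff_inj (m := m) (p := p) (Rs := Rs) (by omega) (by omega) h3
          omega
        · -- B2 : η₁ = rt a₁ b, η₂ = rt a a₁
          have hs1 : a = a₂ := hD1.symm
          subst hs1
          have hs2 : a₁ = b₂ := hD2.symm
          subst hs2
          have hs3 : b = b₁ := hD3.symm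
          subst hs3
          have hmc : s a₁ ≠ a₁ := by
            intro hfix
            apply hmovη₁
            rw [pact_rt, hfix, hB]
          have hcN : (1 ≤ a₁ ∧ a₁ ≤ m+1) ∨ (m+p+2 ≤ a₁ ∧ a₁ ≤ l+1) := by
            by_contra hcon; exact hmc (sfix a₁ hcon)
          obtain ⟨w, hwn, hwa⟩ := ff_ex (m := m) (p := p) (Rs := Rs) (x := a₁)
            (Or.inl ⟨by omega, by omega⟩)
          have hwL : Rs ≤ w := by
            by_contra hcon
            have := ff_R (m := m) (p := p) (Rs := Rs) (t := w) (by omega)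
            omega
          have itc : ∀ j, 1 ≤ j → j ≤ k - 1 → (s⁻¹ ^ j) a₁ < b := by
            intro j h1 h2
            have h := extractPos _ a₁ b hne1 (hitη₁ j h1 h2)
            rw [hbfix j] at h
            exact h.2.1
          have negc : b < (s⁻¹ ^ k) a₁ := by
            have h := extractNeg _ a₁ b hne1 hnegη₁
            rw [hbfix k] at h
            exact h.2.1
          have hk_eq2 : k = w - Rs + 1 := pinB a₁ w hwL hwn hwa itc negc
          have : a₁ = a := by
            rw [← hwa, ← hua]; congr 1; omega
          omega
      · exact ⟨hA, hB⟩
  -- conclude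
  refine ⟨⟨⟨a, b, ha1, hab, hbl, rfl⟩, hmovη⟩, ?_⟩
  rintro (⟨-, hrow⟩ | ⟨-, hcol⟩)
  · rw [pact_rt, row_rt (fun he => hne (s.injective he)), row_rt hne] at hrow
    exact key.1 hrow
  · rw [pact_rt, col_rt (fun he => hne (s.injective he)), col_rt hne] at hcol
    exact key.2 hcol

end DPW
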